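/- If (d_k)_{k≥1} is a sequence of complex numbers with ∑_{k≥1} |d_k|² = 1 and ∑_{k≥1} d_k² = 0, then for all k ≠ m one has |d_k ± d_m|² ≤ 1, i.e. |d_k + d_m|² ≤ 1 and |d_k − d_m|² ≤ 1. -/

import Mathlib

theorem stmt_1 (d : ℕ → ℂ)
    (hs1 : Summable (fun k => ‖d (k + 1)‖ ^ 2))
    (hs2 : Summable (fun k => (d (k + 1)) ^ 2))
    (hnorm : ∑' k : ℕ, ‖d (k + 1)‖ ^ 2 = 1)
    (horth : ∑' k : ℕ, (d (k + 1)) ^ 2 = 0) :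
    ∀ k m : ℕ, 1 ≤ k → 1 ≤ m → k ≠ m →
      ‖d k + d m‖ ^ 2 ≤ 1 ∧ ‖d k - d m‖ ^ 2 ≤ 1 := by
  intro k m hk hm hkm
  obtain ⟨a, rfl⟩ : ∃ a, k = a + 1 := ⟨k - 1, (Nat.succ_pred_eq_of_pos hk).symm⟩
  obtain ⟨b, rfl⟩ : ∃ b, m = b + 1 := ⟨m - 1, (Nat.succ_pred_eq_of_pos hm).symm⟩
  have hab : a ≠ b := fun h => hkm (by rw [h])
  set s : Finset ℕ := {a, b} with hs
  have h2 := Summable.sum_add_tsum_compl (s := s) hs2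
  have h1 := Summable.sum_add_tsum_compl (s := s) hs1
  rw [horth] at h2
  rw [hnorm] at h1
  rw [Finset.sum_pair hab] at h2 h1
  -- key bound on norm of d(a+1)^2 + d(b+1)^2
  have hnt : ‖∑' (i : ↑(↑s : Set ℕ)ᶜ), d (↑i + 1) ^ 2‖
      ≤ ∑' (i : ↑(↑s : Set ℕ)ᶜ), ‖d (↑i + 1)‖ ^ 2 := by
    have := norm_tsum_le_tsum_norm (f := fun i : ↑(↑s : Set ℕ)ᶜ => d (↑i + 1) ^ 2)
      (by simp only [norm_pow]; exact hs1.subtype ((↑s : Set ℕ)ᶜ))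
    simpa [norm_pow] using this
  have key : ‖d (a + 1) ^ 2 + d (b + 1) ^ 2‖ ≤ 1 - ‖d (a + 1)‖ ^ 2 - ‖d (b + 1)‖ ^ 2 := by
    have he : d (a + 1) ^ 2 + d (b + 1) ^ 2 = -∑' (i : ↑(↑s : Set ℕ)ᶜ), d (↑i + 1) ^ 2 := by
      linear_combination h2
    rw [he, norm_neg]
    have : ∑' (i : ↑(↑s : Set ℕ)ᶜ), ‖d (↑i + 1)‖ ^ 2
        = 1 - ‖d (a + 1)‖ ^ 2 - ‖d (b + 1)‖ ^ 2 := by linarith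
    linarith [hnt]
  have hA : ‖(d (a + 1) + d (b + 1)) ^ 2‖ ≤ 1 - (‖d (a + 1)‖ - ‖d (b + 1)‖) ^ 2 := by
    have he : (d (a + 1) + d (b + 1)) ^ 2
        = (d (a + 1) ^ 2 + d (b + 1) ^ 2) + 2 * d (a + 1) * d (b + 1) := by ring
    rw [he]
    calc ‖(d (a + 1) ^ 2 + d (b + 1) ^ 2) + 2 * d (a + 1) * d (b + 1)‖
        ≤ ‖d (a + 1) ^ 2 + d (b + 1) ^ 2‖ + ‖2 * d (a + 1) * d (b + 1)‖ := norm_add_le _ _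
      _ ≤ (1 - ‖d (a + 1)‖ ^ 2 - ‖d (b + 1)‖ ^ 2) + 2 * ‖d (a + 1)‖ * ‖d (b + 1)‖ := by
          have : ‖2 * d (a + 1) * d (b + 1)‖ = 2 * ‖d (a + 1)‖ * ‖d (b + 1)‖ := by
            simp [norm_mul]
          linarith [key]
      _ = 1 - (‖d (a + 1)‖ - ‖d (b + 1)‖) ^ 2 := by ring
  have hB : ‖(d (a + 1) - d (b + 1)) ^ 2‖ ≤ 1 - (‖d (a + 1)‖ - ‖d (b + 1)‖) ^ 2 := by
    have he : (d (a + 1) - d (b + 1)) ^ 2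
        = (d (a + 1) ^ 2 + d (b + 1) ^ 2) - 2 * d (a + 1) * d (b + 1) := by ring
    rw [he]
    calc ‖(d (a + 1) ^ 2 + d (b + 1) ^ 2) - 2 * d (a + 1) * d (b + 1)‖
        ≤ ‖d (a + 1) ^ 2 + d (b + 1) ^ 2‖ + ‖2 * d (a + 1) * d (b + 1)‖ := norm_sub_le _ _
      _ ≤ (1 - ‖d (a + 1)‖ ^ 2 - ‖d (b + 1)‖ ^ 2) + 2 * ‖d (a + 1)‖ * ‖d (b + 1)‖ := by
          have : ‖2 * d (a + 1) * d (b + 1)‖ = 2 * ‖d (a + 1)‖ * ‖d (b + 1)‖ := by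
            simp [norm_mul]
          linarith [key]
      _ = 1 - (‖d (a + 1)‖ - ‖d (b + 1)‖) ^ 2 := by ring
  rw [norm_pow] at hA hB
  constructor
  · nlinarith [sq_nonneg (‖d (a + 1)‖ - ‖d (b + 1)‖)]
  · nlinarith [sq_nonneg (‖d (a + 1)‖ - ‖d (b + 1)‖)]
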